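/- Let α be strictly increasing with α_n > 1, α_n → ∞, and lim_{n→∞} (log n)/α_n = 0 (i.e. Λ₀(α) is nuclear). The following assertions are equivalent: (a) the operator Δ, given by (Δx)_n := Σ_{m=1}^n (−1)^{m−1}·binom(n−1, m−1)·x_m, maps Λ₀(α) into itself and is continuous; (b) for each k ≥ 1 there exists l ≥ k such that sup_{n≥1} Σ_{m=1}^n (e^{-α_n/k}/e^{-α_m/l})·binom(n−1, m−1) < ∞; (c) lim_{n→∞} n/α_n = 0. -/

import Mathlib

open Filter Finset Topology

noncomputable section

/-- The weight `w_k(n) = e^{-alpha_n / k}`.  Indices are shifted by one: the natural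
numbers `k n : Nat` represent the indices `k+1` and `n+1` (both running from `1`). -/
def wt (a : ℕ → ℝ) (k n : ℕ) : ℝ := Real.exp (-(a n) / ((k : ℝ) + 1))

/-- Membership in the power series space of finite type `Λ₀(α)`:
`x ∈ Λ₀(α)` iff `w_k(n)|x_n| → 0` for every `k ≥ 1`. -/
def memLambda (a : ℕ → ℝ) (x : ℕ → ℂ) : Prop :=
  ∀ k : ℕ, Tendsto (fun n => wt a k n * ‖x n‖) atTop (𝓝 0)

/-- The norm `p_k(x) = sup_n w_k(n)|x_n|` generating the Fréchet topology of `Λ₀(α)`. -/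
def pk (a : ℕ → ℝ) (k : ℕ) (x : ℕ → ℂ) : ℝ := ⨆ n : ℕ, wt a k n * ‖x n‖

/-- The discrete Cesàro operator `(C x)_n = (x_1 + ⋯ + x_n)/n` (0-indexed). -/
def cesaro (x : ℕ → ℂ) : ℕ → ℂ := fun n => (∑ i ∈ Finset.range (n + 1), x i) / ((n : ℂ) + 1)

/-- The operator `Δ` given by the lower triangular matrix
`Δ_{n,m} = (-1)^{m-1} C(n-1, m-1)` for `1 ≤ m ≤ n` (0-indexed here). -/
def deltaOp (x : ℕ → ℂ) : ℕ → ℂ :=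
  fun n => ∑ m ∈ Finset.range (n + 1), ((-1 : ℂ) ^ m * (n.choose m : ℂ)) * x m

lemma wt_pos (a : ℕ → ℝ) (k n : ℕ) : 0 < wt a k n := Real.exp_pos _

lemma wt_le_one {a : ℕ → ℝ} (h1 : ∀ n, 1 < a n) (k n : ℕ) : wt a k n ≤ 1 := by
  rw [wt, Real.exp_le_one_iff]
  have := h1 n
  apply div_nonpos_of_nonpos_of_nonneg <;> [linarith; positivity]

lemma delta_term_bound {a : ℕ → ℝ} {k l : ℕ} {M : ℝ}
    (hM : ∀ n : ℕ, (∑ m ∈ Finset.range (n + 1), wt a k n / wt a l m * (n.choose m : ℝ)) ≤ M)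
    {x : ℕ → ℂ} (hx : memLambda a x) (n : ℕ) :
    wt a k n * ‖deltaOp x n‖ ≤ M * pk a l x := by
  have hbdd : BddAbove (Set.range fun m => wt a l m * ‖x m‖) := (hx l).bddAbove_range
  have hterm : ∀ m, wt a l m * ‖x m‖ ≤ pk a l x := fun m => le_ciSup hbdd m
  have hpk0 : 0 ≤ pk a l x :=
    le_trans (mul_nonneg (wt_pos a l 0).le (norm_nonneg _)) (hterm 0)
  have h2 : ‖deltaOp x n‖ ≤ ∑ m ∈ Finset.range (n+1), (n.choose m : ℝ) * ‖x m‖ := by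
    refine (norm_sum_le _ _).trans_eq (Finset.sum_congr rfl fun m _ => ?_)
    simp [Complex.norm_natCast]
  calc wt a k n * ‖deltaOp x n‖
      ≤ wt a k n * ∑ m ∈ Finset.range (n+1), (n.choose m : ℝ) * ‖x m‖ :=
        mul_le_mul_of_nonneg_left h2 (wt_pos a k n).le
    _ = ∑ m ∈ Finset.range (n+1), (wt a k n / wt a l m * (n.choose m:ℝ)) * (wt a l m * ‖x m‖) := by
        rw [Finset.mul_sum]; refine Finset.sum_congr rfl fun m _ => ?_
        have := (wt_pos a l m).ne'
        field_simp
    _ ≤ ∑ m ∈ Finset.range (n+1), (wt a k n / wt a l m * (n.choose m:ℝ)) * pk a l x := by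
        refine Finset.sum_le_sum fun m _ => mul_le_mul_of_nonneg_left (hterm m)
          (mul_nonneg (div_nonneg (wt_pos a k n).le (wt_pos a l m).le) (Nat.cast_nonneg _))
    _ = (∑ m ∈ Finset.range (n+1), wt a k n / wt a l m * (n.choose m:ℝ)) * pk a l x :=
        (Finset.sum_mul _ _ _).symm
    _ ≤ M * pk a l x := mul_le_mul_of_nonneg_right (hM n) hpk0

lemma two_to_one {a : ℕ → ℝ} (htop : Tendsto a atTop atTop)
    (h2 : ∀ k : ℕ, ∃ l : ℕ, k ≤ l ∧ ∃ M : ℝ, ∀ n : ℕ,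
        (∑ m ∈ Finset.range (n + 1), wt a k n / wt a l m * (n.choose m : ℝ)) ≤ M) :
    (∀ x, memLambda a x → memLambda a (deltaOp x)) ∧
      (∀ k : ℕ, ∃ l : ℕ, ∃ M : ℝ, 0 < M ∧
        ∀ x, memLambda a x → pk a k (deltaOp x) ≤ M * pk a l x) := by
  constructor
  · intro x hx k
    obtain ⟨l, -, M, hM⟩ := h2 (k + 1)
    set B := M * pk a l x with hB
    have hbound : ∀ n, wt a (k+1) n * ‖deltaOp x n‖ ≤ B :=
      fun n => delta_term_bound hM hx n
    have hB0 : 0 ≤ B :=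
      le_trans (mul_nonneg (wt_pos a (k+1) 0).le (norm_nonneg _)) (hbound 0)
    set c : ℝ := 1 / ((k:ℝ)+1) - 1 / ((k:ℝ)+2) with hc
    have hcpos : 0 < c := by
      rw [hc]
      have h1 : (0:ℝ) < (k:ℝ)+1 := by positivity
      have h2 : (0:ℝ) < (k:ℝ)+2 := by positivity
      rw [sub_pos, div_lt_div_iff₀ h2 h1]
      linarith
    have hsplit : ∀ n, wt a k n = Real.exp (-(c * a n)) * wt a (k+1) n := by
      intro n
      rw [wt, wt, ← Real.exp_add]
      congr 1
      have h1 : ((k:ℝ)+1) ≠ 0 := by positivity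
      have h2 : ((k:ℝ)+1+1) ≠ 0 := by positivity
      push_cast
      rw [hc]
      field_simp
      ring
    have hg : Tendsto (fun n => Real.exp (-(c * a n)) * B) atTop (𝓝 0) := by
      have h1 : Tendsto (fun n => -(c * a n)) atTop atBot :=
        tendsto_neg_atTop_atBot.comp (htop.const_mul_atTop hcpos)
      simpa using (Real.tendsto_exp_atBot.comp h1).mul_const B
    refine squeeze_zero (fun n => mul_nonneg (wt_pos a k n).le (norm_nonneg _)) ?_ hg
    intro n
    rw [hsplit n, mul_assoc]
    exact mul_le_mul_of_nonneg_left (hbound n) (Real.exp_pos _).le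
  · intro k
    obtain ⟨l, -, M, hM⟩ := h2 k
    refine ⟨l, max M 1, lt_of_lt_of_le one_pos (le_max_right _ _), fun x hx => ?_⟩
    have hbound : ∀ n, wt a k n * ‖deltaOp x n‖ ≤ M * pk a l x :=
      fun n => delta_term_bound hM hx n
    have hpk0 : 0 ≤ pk a l x := by
      have hbdd : BddAbove (Set.range fun m => wt a l m * ‖x m‖) :=
        (hx l).bddAbove_range
      exact le_trans (mul_nonneg (wt_pos a l 0).le (norm_nonneg _)) (le_ciSup hbdd 0)
    exact ciSup_le fun n => (hbound n).trans
      (mul_le_mul_of_nonneg_right (le_max_left M 1) hpk0)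

lemma three_to_two {a : ℕ → ℝ} (hmono : StrictMono a) (h1 : ∀ n, 1 < a n)
    (h3 : Tendsto (fun n : ℕ => ((n : ℝ) + 1) / a n) atTop (𝓝 0)) :
    ∀ k : ℕ, ∃ l : ℕ, k ≤ l ∧ ∃ M : ℝ, ∀ n : ℕ,
        (∑ m ∈ Finset.range (n + 1), wt a k n / wt a l m * (n.choose m : ℝ)) ≤ M := by
  intro k
  refine ⟨2*k+1, by omega, ?_⟩
  set S : ℕ → ℝ := fun n => ∑ m ∈ Finset.range (n + 1), wt a k n / wt a (2*k+1) m * (n.choose m : ℝ)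
    with hS
  have hS0 : ∀ n, 0 ≤ S n := fun n => Finset.sum_nonneg fun m _ =>
    mul_nonneg (div_nonneg (wt_pos a k n).le (wt_pos a (2*k+1) m).le) (Nat.cast_nonneg _)
  have hk1 : ((k:ℝ)+1) ≠ 0 := by positivity
  have hsq : ∀ n, wt a k n = wt a (2*k+1) n * wt a (2*k+1) n := by
    intro n
    rw [wt, wt, ← Real.exp_add]
    congr 1
    have h2 : ((2*k+1:ℕ):ℝ)+1 ≠ 0 := by positivity
    push_cast at h2 ⊢
    field_simp
    ring
  have hanti : ∀ {m n : ℕ}, m ≤ n → wt a (2*k+1) n ≤ wt a (2*k+1) m := by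
    intro m n hmn
    rw [wt, wt, Real.exp_le_exp]
    have ham : a m ≤ a n := hmono.monotone hmn
    have hd : (0:ℝ) < ((2*k+1:ℕ):ℝ)+1 := by positivity
    rw [div_le_div_iff₀ hd hd]
    nlinarith
  have key : ∀ n, S n ≤ wt a (2*k+1) n * 2 ^ n := by
    intro n
    calc S n ≤ ∑ m ∈ Finset.range (n+1), wt a (2*k+1) n * (n.choose m : ℝ) := by
          refine Finset.sum_le_sum fun m hm => ?_
          refine mul_le_mul_of_nonneg_right ?_ (Nat.cast_nonneg _)
          rw [div_le_iff₀ (wt_pos a (2*k+1) m), hsq n]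
          exact mul_le_mul_of_nonneg_left (hanti (Finset.mem_range_succ_iff.mp hm))
            (wt_pos a (2*k+1) n).le
      _ = wt a (2*k+1) n * 2 ^ n := by
          rw [← Finset.mul_sum]
          congr 1
          exact_mod_cast Nat.sum_range_choose n
  have hlog : (0:ℝ) < Real.log 2 := Real.log_pos one_lt_two
  have hpos : (0:ℝ) < 1/(2*((k:ℝ)+1)*Real.log 2) := by positivity
  have hev : ∀ᶠ n : ℕ in atTop, S n ≤ 1 := by
    filter_upwards [h3.eventually_lt_const hpos] with n hn
    have han : (0:ℝ) < a n := lt_trans one_pos (h1 n)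
    have hn1 : ((n:ℝ)+1) < 1/(2*((k:ℝ)+1)*Real.log 2) * a n := by
      rwa [div_lt_iff₀ han] at hn
    have hexp : (n:ℝ) * Real.log 2 - a n/(2*((k:ℝ)+1)) ≤ 0 := by
      have h2 : (0:ℝ) < 2*((k:ℝ)+1)*Real.log 2 := by positivity
      rw [div_mul_eq_mul_div, lt_div_iff₀ h2] at hn1
      have hle : (n:ℝ) * Real.log 2 ≤ ((n:ℝ)+1) * Real.log 2 := by nlinarith
      rw [sub_nonpos]
      calc (n:ℝ) * Real.log 2 ≤ ((n:ℝ)+1) * Real.log 2 := hle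
        _ ≤ a n / (2*((k:ℝ)+1)) := by
            rw [le_div_iff₀ (by positivity : (0:ℝ) < 2*((k:ℝ)+1))]
            nlinarith
    have h2n : (2:ℝ)^n = Real.exp ((n:ℝ)*Real.log 2) := by
      rw [Real.exp_nat_mul, Real.exp_log (by norm_num : (0:ℝ) < 2)]
    calc S n ≤ wt a (2*k+1) n * 2 ^ n := key n
      _ = Real.exp (-(a n)/(2*((k:ℝ)+1)) + (n:ℝ)*Real.log 2) := by
          rw [wt, h2n, ← Real.exp_add]
          congr 1
          push_cast
          ring
      _ ≤ Real.exp 0 := Real.exp_le_exp.mpr (by rw [neg_div]; linarith)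
      _ = 1 := Real.exp_zero
  obtain ⟨N, hN⟩ := eventually_atTop.mp hev
  refine ⟨1 + ∑ j ∈ Finset.range N, S j, fun n => ?_⟩
  have hsum0 : 0 ≤ ∑ j ∈ Finset.range N, S j := Finset.sum_nonneg fun j _ => hS0 j
  rcases le_or_gt N n with h | h
  · linarith [hN n h]
  · have := Finset.single_le_sum (fun j (_ : j ∈ Finset.range N) => hS0 j)
      (Finset.mem_range.mpr h)
    linarith

lemma one_to_three {a : ℕ → ℝ} (h1 : ∀ n, 1 < a n) (htop : Tendsto a atTop atTop)
    (hnuc : Tendsto (fun n : ℕ => Real.log ((n : ℝ) + 1) / a n) atTop (𝓝 0))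
    (H : (∀ x, memLambda a x → memLambda a (deltaOp x)) ∧
        (∀ k : ℕ, ∃ l : ℕ, ∃ M : ℝ, 0 < M ∧
          ∀ x, memLambda a x → pk a k (deltaOp x) ≤ M * pk a l x)) :
    Tendsto (fun n : ℕ => ((n : ℝ) + 1) / a n) atTop (𝓝 0) := by
  have hlog2 : (0:ℝ) < Real.log 2 := Real.log_pos one_lt_two
  have he_mem : ∀ m : ℕ, memLambda a (fun j => if j = m then (1:ℂ) else 0) := by
    intro m k
    have hev : ∀ᶠ n : ℕ in atTop,
        (0:ℝ) = wt a k n * ‖if n = m then (1:ℂ) else 0‖ := by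
      filter_upwards [eventually_gt_atTop m] with n hn
      rw [if_neg hn.ne', norm_zero, mul_zero]
    exact Tendsto.congr' hev tendsto_const_nhds
  have hdelta : ∀ m n : ℕ,
      ‖deltaOp (fun j => if j = m then (1:ℂ) else 0) n‖ = (n.choose m : ℝ) := by
    intro m n
    have heq : deltaOp (fun j => if j = m then (1:ℂ) else 0) n
        = if m ∈ Finset.range (n+1) then (-1:ℂ)^m * (n.choose m : ℂ) else 0 := by
      rw [deltaOp, ← Finset.sum_ite_eq' (Finset.range (n+1)) m
        (fun j => (-1:ℂ)^j * (n.choose j : ℂ))]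
      refine Finset.sum_congr rfl fun j _ => ?_
      by_cases h : j = m <;> simp [h]
    rw [heq]
    by_cases h : m ∈ Finset.range (n+1)
    · rw [if_pos h, norm_mul, norm_pow]
      simp [Complex.norm_natCast]
    · rw [if_neg h, norm_zero]
      rw [Finset.mem_range] at h
      rw [Nat.choose_eq_zero_of_lt (by omega)]
      simp
  rw [NormedAddCommGroup.tendsto_nhds_zero]
  intro ε hε
  obtain ⟨k, hk⟩ := exists_nat_gt (2/(ε * Real.log 2))
  have hc : 1/(((k:ℝ)+1)*Real.log 2) < ε/2 := by
    rw [div_lt_div_iff₀ (by positivity) (by norm_num)]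
    rw [div_lt_iff₀ (by positivity)] at hk
    nlinarith [mul_pos hε hlog2]
  obtain ⟨l, M, hMpos, hM⟩ := H.2 k
  -- the key estimate on basis vectors
  have hest : ∀ m n : ℕ, wt a k n * (n.choose m : ℝ) ≤ M * wt a l m := by
    intro m n
    set e : ℕ → ℂ := fun j => if j = m then (1:ℂ) else 0 with he
    have hmem := he_mem m
    have hpkl : pk a l e ≤ wt a l m := by
      refine ciSup_le fun j => ?_
      by_cases h : j = m
      · subst h; simp [e]
      · simp [e, h]
        exact (wt_pos a l m).le
    have hbdd : BddAbove (Set.range fun n => wt a k n * ‖deltaOp e n‖) :=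
      ((H.1 e hmem) k).bddAbove_range
    calc wt a k n * (n.choose m:ℝ) = wt a k n * ‖deltaOp e n‖ := by
          rw [hdelta m n]
      _ ≤ pk a k (deltaOp e) := le_ciSup hbdd n
      _ ≤ M * pk a l e := hM e hmem
      _ ≤ M * wt a l m := mul_le_mul_of_nonneg_left hpkl hMpos.le
  have hlogineq : ∀ n : ℕ,
      (n:ℝ) * Real.log 2 ≤ Real.log ((n:ℝ)+1) + Real.log M + a n/((k:ℝ)+1) := by
    intro n
    have hcentral : (2:ℝ)^n ≤ ((n:ℝ)+1) * (n.choose (n/2) : ℝ) := by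
      have h := Finset.sum_le_card_nsmul (Finset.range (n+1)) (fun j => n.choose j)
        (n.choose (n/2)) (fun j _ => Nat.choose_le_middle j n)
      rw [Nat.sum_range_choose, Finset.card_range, smul_eq_mul] at h
      exact_mod_cast h
    have h4 : (n.choose (n/2):ℝ) ≤ M / wt a k n := by
      rw [le_div_iff₀ (wt_pos a k n)]
      have h3 : M * wt a l (n/2) ≤ M :=
        mul_le_of_le_one_right hMpos.le (wt_le_one h1 _ _)
      calc (n.choose (n/2):ℝ) * wt a k n = wt a k n * (n.choose (n/2):ℝ) := mul_comm _ _
        _ ≤ M * wt a l (n/2) := hest (n/2) n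
        _ ≤ M := h3
    rw [wt, neg_div, Real.exp_neg, div_inv_eq_mul] at h4
    have hpow : (2:ℝ)^n ≤ ((n:ℝ)+1) * (M * Real.exp (a n/((k:ℝ)+1))) :=
      hcentral.trans (mul_le_mul_of_nonneg_left h4 (by positivity))
    have hlogle := Real.log_le_log (by positivity) hpow
    rw [Real.log_pow, Real.log_mul (by positivity) (by positivity),
      Real.log_mul hMpos.ne' (Real.exp_pos _).ne', Real.log_exp] at hlogle
    linarith
  -- the vanishing quantity
  have hq0 : Tendsto (fun n : ℕ =>
      (Real.log ((n:ℝ)+1) + Real.log M + Real.log 2)/(a n)/Real.log 2) atTop (𝓝 0) := by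
    have hainv : Tendsto (fun n : ℕ => (a n)⁻¹) atTop (𝓝 0) := htop.inv_tendsto_atTop
    have h1' : Tendsto (fun n : ℕ => (Real.log M + Real.log 2) * (a n)⁻¹) atTop (𝓝 0) := by
      simpa using hainv.const_mul (Real.log M + Real.log 2)
    have h2' := (hnuc.add h1').div_const (Real.log 2)
    simp only [add_zero, zero_div] at h2'
    exact h2'.congr fun n => by simp only [div_eq_mul_inv]; ring
  filter_upwards [hq0.eventually_lt_const (half_pos hε)] with n hq
  have han : (0:ℝ) < a n := lt_trans one_pos (h1 n)
  rw [Real.norm_eq_abs, abs_of_nonneg (div_nonneg (by positivity) han.le), div_lt_iff₀ han]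
  -- from hq : (log(n+1)+logM+log2)/a n/log2 < ε/2
  have hB' : Real.log ((n:ℝ)+1) + Real.log M + Real.log 2 < ε/2 * Real.log 2 * a n := by
    have h5 := (div_lt_iff₀ hlog2).mp hq
    have h6 := (div_lt_iff₀ han).mp h5
    nlinarith
  have hC' : a n/((k:ℝ)+1) < ε/2 * Real.log 2 * a n := by
    have heq : a n / ((k:ℝ)+1) = (1/(((k:ℝ)+1)*Real.log 2)) * (Real.log 2 * a n) := by
      field_simp
    rw [heq]
    calc (1/(((k:ℝ)+1)*Real.log 2)) * (Real.log 2 * a n)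
        < ε/2 * (Real.log 2 * a n) :=
          mul_lt_mul_of_pos_right hc (by positivity)
      _ = ε/2 * Real.log 2 * a n := by ring
  have hfin : ((n:ℝ)+1) * Real.log 2 < ε * a n * Real.log 2 := by
    have := hlogineq n
    nlinarith
  exact lt_of_mul_lt_mul_right hfin hlog2.le

/-- assume `Λ₀(α)` is nuclear (`(log n)/α_n → 0`).  The following are
equivalent: (a) `Δ` maps `Λ₀(α)` into itself and is continuous; (b) for each `k`
there is `l ≥ k` with `sup_n ∑_{m=1}^n (w_k(n)/w_l(m)) C(n-1, m-1) < ∞`;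
(c) `n/α_n → 0`. -/
theorem stmt10 (a : ℕ → ℝ) (hmono : StrictMono a) (h1 : ∀ n, 1 < a n)
    (htop : Tendsto a atTop atTop)
    (hnuc : Tendsto (fun n : ℕ => Real.log ((n : ℝ) + 1) / a n) atTop (𝓝 0)) :
    [ (∀ x, memLambda a x → memLambda a (deltaOp x)) ∧
        (∀ k : ℕ, ∃ l : ℕ, ∃ M : ℝ, 0 < M ∧
          ∀ x, memLambda a x → pk a k (deltaOp x) ≤ M * pk a l x),
      ∀ k : ℕ, ∃ l : ℕ, k ≤ l ∧ ∃ M : ℝ, ∀ n : ℕ,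
        (∑ m ∈ Finset.range (n + 1), wt a k n / wt a l m * (n.choose m : ℝ)) ≤ M,
      Tendsto (fun n : ℕ => ((n : ℝ) + 1) / a n) atTop (𝓝 0) ].TFAE := by
  tfae_have 3 → 2 := three_to_two hmono h1
  tfae_have 2 → 1 := two_to_one htop
  tfae_have 1 → 3 := one_to_three h1 htop hnuc
  tfae_finish
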